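/- Monotonic improvement guarantee of rollout (Theorem 1, discounted stationary form): let πb be a policy and let π' be a policy such that for every state s, the action π' s minimizes a ↦ g s a + γ * V πb (f s a) over adm s. Then for every state s, V π' s ≤ V πb s. -/

import Mathlib

/-- Discounted cost of a stationary policy `π`:
`V π s = ∑' n, γ^n * g (fπ^[n] s) (π (fπ^[n] s))` where `fπ s = f s (π s)`. -/
noncomputable def discCost {S A : Type*} (f : S → A → S) (g : S → A → ℝ) (γ : ℝ)
    (π : S → A) (s : S) : ℝ :=
  ∑' n, γ ^ n * g ((fun s' => f s' (π s'))^[n] s) (π ((fun s' => f s' (π s'))^[n] s))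

/-- Monotonic improvement guarantee of rollout (discounted stationary form). -/
theorem discounted_rollout_monotonic_improvement
    {S A : Type*} (adm : S → Finset A) (hadm : ∀ s, (adm s).Nonempty)
    (f : S → A → S) (C : ℝ) (hC : 0 ≤ C)
    (g : S → A → ℝ) (hg : ∀ s a, 0 ≤ g s a ∧ g s a ≤ C)
    (γ : ℝ) (hγ0 : 0 ≤ γ) (hγ1 : γ < 1)
    (πb : S → A) (hπb : ∀ s, πb s ∈ adm s)
    (π' : S → A) (hπ' : ∀ s, π' s ∈ adm s)
    (hmin : ∀ s, ∀ a ∈ adm s,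
      g s (π' s) + γ * discCost f g γ πb (f s (π' s))
        ≤ g s a + γ * discCost f g γ πb (f s a)) :
    ∀ s, discCost f g γ π' s ≤ discCost f g γ πb s := by
  have hgnn : ∀ s a, 0 ≤ g s a := fun s a => (hg s a).1
  have hsum : ∀ (π : S → A) (s : S),
      Summable (fun n => γ ^ n * g ((fun s' => f s' (π s'))^[n] s)
        (π ((fun s' => f s' (π s'))^[n] s))) := by
    intro π s
    apply Summable.of_nonneg_of_le
      (fun n => mul_nonneg (pow_nonneg hγ0 n) (hgnn _ _))
      (fun n => ?_) ((summable_geometric_of_lt_one hγ0 hγ1).mul_left C)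
    calc γ ^ n * g _ _ ≤ γ ^ n * C :=
          mul_le_mul_of_nonneg_left (hg _ _).2 (pow_nonneg hγ0 n)
      _ = C * γ ^ n := mul_comm _ _
  have hVnn : ∀ (π : S → A) (s : S), 0 ≤ discCost f g γ π s := by
    intro π s
    exact tsum_nonneg (fun n => mul_nonneg (pow_nonneg hγ0 n) (hgnn _ _))
  have hbell : ∀ (π : S → A) (s : S),
      discCost f g γ π s = g s (π s) + γ * discCost f g γ π (f s (π s)) := by
    intro π s
    unfold discCost
    rw [Summable.tsum_eq_zero_add (hsum π s)]
    simp only [pow_zero, one_mul, Function.iterate_zero_apply]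
    congr 1
    rw [← tsum_mul_left]
    apply tsum_congr
    intro n
    simp only [Function.iterate_succ_apply]
    ring
  have hkey : ∀ s, g s (π' s) + γ * discCost f g γ πb (f s (π' s)) ≤ discCost f g γ πb s := by
    intro s
    calc g s (π' s) + γ * discCost f g γ πb (f s (π' s))
        ≤ g s (πb s) + γ * discCost f g γ πb (f s (πb s)) := hmin s (πb s) (hπb s)
      _ = discCost f g γ πb s := (hbell πb s).symm
  set F' := fun s' => f s' (π' s') with hF'
  have hpartial : ∀ N s,
      (∑ n ∈ Finset.range N, γ ^ n * g (F'^[n] s) (π' (F'^[n] s)))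
        + γ ^ N * discCost f g γ πb (F'^[N] s) ≤ discCost f g γ πb s := by
    intro N
    induction N with
    | zero => intro s; simp
    | succ N ih =>
      intro s
      rw [Finset.sum_range_succ']
      simp only [Function.iterate_succ_apply, pow_zero, one_mul,
        Function.iterate_zero_apply]
      have h1 : γ * (∑ n ∈ Finset.range N, γ ^ n * g (F'^[n] (F' s)) (π' (F'^[n] (F' s))))
          = ∑ n ∈ Finset.range N, γ ^ (n + 1) * g (F'^[n] (F' s)) (π' (F'^[n] (F' s))) := by
        rw [Finset.mul_sum]
        exact Finset.sum_congr rfl fun n _ => by ring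
      have h2 : γ * (γ ^ N * discCost f g γ πb (F'^[N] (F' s)))
          = γ ^ (N + 1) * discCost f g γ πb (F'^[N] (F' s)) := by ring
      calc (∑ n ∈ Finset.range N, γ ^ (n + 1) * g (F'^[n] (F' s)) (π' (F'^[n] (F' s))))
            + g s (π' s) + γ ^ (N + 1) * discCost f g γ πb (F'^[N] (F' s))
          = g s (π' s) + γ * ((∑ n ∈ Finset.range N, γ ^ n * g (F'^[n] (F' s)) (π' (F'^[n] (F' s))))
            + γ ^ N * discCost f g γ πb (F'^[N] (F' s))) := by rw [mul_add, h1, h2]; ring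
        _ ≤ g s (π' s) + γ * discCost f g γ πb (F' s) :=
            add_le_add_right (mul_le_mul_of_nonneg_left (ih (F' s)) hγ0) _
        _ ≤ discCost f g γ πb s := hkey s
  intro s
  have hle : ∀ N, ∑ n ∈ Finset.range N, γ ^ n * g (F'^[n] s) (π' (F'^[n] s))
      ≤ discCost f g γ πb s := by
    intro N
    have h := hpartial N s
    have h2 : 0 ≤ γ ^ N * discCost f g γ πb (F'^[N] s) :=
      mul_nonneg (pow_nonneg hγ0 N) (hVnn _ _)
    linarith
  exact le_of_tendsto (hsum π' s).hasSum.tendsto_sum_nat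
    (Filter.Eventually.of_forall hle)
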